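/- (NR equilibrium characterization.) Assume d_A ≠ 0 and d_B ≠ 0. The profile (0,0) is a Nash equilibrium of the digital representative game if and only if p ≥ d_A² and p ≥ d_B². -/

import Mathlib

open Set Filter

/-- Team decision formed by the two digital representatives. -/
noncomputable def teamDec (lam : ℝ → ℝ) (thA thB mu : ℝ) (aA aB : ℝ) : ℝ :=
  (lam aA * thA + (1 - lam aA) * mu + lam aB * thB + (1 - lam aB) * mu) / 2

/-- Alice's total loss: preference loss plus communication cost. -/
noncomputable def lossA (lam c : ℝ → ℝ) (thA thB mu : ℝ) (aA aB : ℝ) : ℝ :=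
  (thA - teamDec lam thA thB mu aA aB) ^ 2 + c aA

/-- Bob's total loss: preference loss plus communication cost. -/
noncomputable def lossB (lam c : ℝ → ℝ) (thA thB mu : ℝ) (aA aB : ℝ) : ℝ :=
  (thB - teamDec lam thA thB mu aA aB) ^ 2 + c aB

/-- The function `f_m(α) = λ(α) + (2/d_m²)·c'(α)/λ'(α)`. -/
noncomputable def fFun (lam lam' c' : ℝ → ℝ) (d : ℝ) (α : ℝ) : ℝ :=
  lam α + (2 / d ^ 2) * (c' α / lam' α)

/-- The function `h_m(α) = 2 − λ(α)·d_{−m}/d_m`. -/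
noncomputable def hFun (lam : ℝ → ℝ) (dm dOther : ℝ) (α : ℝ) : ℝ :=
  2 - lam α * dOther / dm

/-- `a` is a best response of Alice to Bob's revelation `aB`:
it minimizes `α ↦ L_A(α, aB)` over `[0,1)`. -/
def IsBestRespA (lam c : ℝ → ℝ) (thA thB mu : ℝ) (a aB : ℝ) : Prop :=
  a ∈ Set.Ico (0:ℝ) 1 ∧
    ∀ x ∈ Set.Ico (0:ℝ) 1, lossA lam c thA thB mu a aB ≤ lossA lam c thA thB mu x aB

/-- Nash equilibrium of the digital representative game. -/
def IsNashEq (lam c : ℝ → ℝ) (thA thB mu : ℝ) (aA aB : ℝ) : Prop :=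
  aA ∈ Set.Ico (0:ℝ) 1 ∧ aB ∈ Set.Ico (0:ℝ) 1 ∧
  (∀ α ∈ Set.Ico (0:ℝ) 1, lossA lam c thA thB mu aA aB ≤ lossA lam c thA thB mu α aB) ∧
  (∀ α ∈ Set.Ico (0:ℝ) 1, lossB lam c thA thB mu aA aB ≤ lossB lam c thA thB mu aA α)


lemma key_min_iff (lam lam' c c' : ℝ → ℝ)
    (hlamDeriv : ∀ α ∈ Set.Icc (0:ℝ) 1, HasDerivAt lam (lam' α) α)
    (hlam0 : lam 0 = 0) (hlam1 : lam 1 = 1)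
    (hlam'pos : ∀ α ∈ Set.Icc (0:ℝ) 1, 0 < lam' α)
    (hlam'anti : ∀ x ∈ Set.Icc (0:ℝ) 1, ∀ y ∈ Set.Icc (0:ℝ) 1, x ≤ y → lam' y ≤ lam' x)
    (hcDeriv : ∀ α ∈ Set.Ico (0:ℝ) 1, HasDerivAt c (c' α) α)
    (hc'strictMono : ∀ x ∈ Set.Ico (0:ℝ) 1, ∀ y ∈ Set.Ico (0:ℝ) 1, x < y → c' x < c' y)
    (d : ℝ) (hd : d ≠ 0) :
    (∀ α ∈ Set.Ico (0:ℝ) 1,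
        d^2*(1 - lam 0/2)^2 + c 0 ≤ d^2*(1 - lam α/2)^2 + c α)
      ↔ c' 0 / lam' 0 ≥ d ^ 2 := by
  have h01 : (0:ℝ) ∈ Set.Icc (0:ℝ) 1 := ⟨le_refl 0, zero_le_one⟩
  have h0i : (0:ℝ) ∈ Set.Ico (0:ℝ) 1 := ⟨le_refl 0, zero_lt_one⟩
  have hl0pos : 0 < lam' 0 := hlam'pos 0 h01
  set g : ℝ → ℝ := fun α => d^2*(1 - lam α/2)^2 + c α with hg
  have hgd : ∀ α ∈ Set.Ico (0:ℝ) 1,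
      HasDerivAt g (c' α - d^2 * lam' α * (1 - lam α/2)) α := by
    intro α hα
    have h1 : HasDerivAt (fun x => 1 - lam x/2) (-(lam' α/2)) α :=
      ((hlamDeriv α ⟨hα.1, hα.2.le⟩).div_const 2).const_sub 1
    have h2 := ((h1.pow 2).const_mul (d^2)).add (hcDeriv α hα)
    refine h2.congr_deriv ?_
    ring
  -- lam is monotone on Icc 0 1
  have hmono : StrictMonoOn lam (Set.Icc (0:ℝ) 1) := by
    apply strictMonoOn_of_deriv_pos (convex_Icc 0 1)
    · exact fun x hx => (hlamDeriv x hx).continuousAt.continuousWithinAt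
    · intro x hx
      have hx' : x ∈ Set.Icc (0:ℝ) 1 := interior_subset hx
      rw [(hlamDeriv x hx').deriv]
      exact hlam'pos x hx'
  have hlam_mem : ∀ α ∈ Set.Icc (0:ℝ) 1, 0 ≤ lam α ∧ lam α ≤ 1 := by
    intro α hα
    constructor
    · rw [← hlam0]; exact hmono.monotoneOn h01 hα hα.1
    · rw [← hlam1]; exact hmono.monotoneOn hα ⟨hα.1.trans hα.2, le_refl 1⟩ hα.2
  constructor
  · intro hmin
    by_contra hp
    push_neg at hp
    have hc0lt : c' 0 < d^2 * lam' 0 := (div_lt_iff₀ hl0pos).mp hp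
    have hD : HasDerivAt g (c' 0 - d^2 * lam' 0 * (1 - lam 0/2)) 0 := hgd 0 h0i
    have hDneg : c' 0 - d^2 * lam' 0 * (1 - lam 0/2) < 0 := by
      rw [hlam0]; nlinarith
    rw [hasDerivAt_iff_tendsto_slope] at hD
    have hD' : Filter.Tendsto (slope g 0) (nhdsWithin 0 (Set.Ioi 0)) (nhds _) :=
      hD.mono_left (nhdsWithin_mono 0 (fun x hx => by
        simp only [Set.mem_compl_iff, Set.mem_singleton_iff]
        exact ne_of_gt hx))
    have hneg : ∀ᶠ t in nhdsWithin 0 (Set.Ioi 0), slope g 0 t < 0 :=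
      hD'.eventually (Filter.Tendsto.eventually_lt_const hDneg tendsto_id) |>.mono (fun x h => h)
    have hIoo : Set.Ioo (0:ℝ) 1 ∈ nhdsWithin (0:ℝ) (Set.Ioi 0) :=
      Ioo_mem_nhdsGT_of_mem ⟨le_refl 0, zero_lt_one⟩
    obtain ⟨t, hts, ht⟩ := (hneg.and (eventually_of_mem hIoo (fun x hx => hx))).exists
    have htpos : 0 < t := ht.1
    rw [slope_def_field] at hts
    have hgt : g t < g 0 := by
      have := hts
      rw [div_lt_iff₀ (by linarith : (0:ℝ) < t - 0)] at this
      · linarith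
    exact absurd (hmin t ⟨htpos.le, ht.2⟩) (not_le.mpr hgt)
  · intro hp α hα
    rcases eq_or_lt_of_le hα.1 with h | h
    · rw [← h]
    have hc0 : d^2 * lam' 0 ≤ c' 0 := (le_div_iff₀ hl0pos).mp hp
    have hmonoG : MonotoneOn g (Set.Icc 0 α) := by
      apply monotoneOn_of_deriv_nonneg (convex_Icc 0 α)
      · intro x hx
        have hx' : x ∈ Set.Ico (0:ℝ) 1 := ⟨hx.1, lt_of_le_of_lt hx.2 hα.2⟩
        exact ((hgd x hx').differentiableAt).continuousAt.continuousWithinAt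
      · intro x hx
        rw [interior_Icc] at hx
        have hx' : x ∈ Set.Ico (0:ℝ) 1 := ⟨hx.1.le, lt_trans hx.2 hα.2⟩
        exact ((hgd x hx').differentiableAt).differentiableWithinAt
      · intro x hx
        rw [interior_Icc] at hx
        have hx' : x ∈ Set.Ico (0:ℝ) 1 := ⟨hx.1.le, lt_trans hx.2 hα.2⟩
        rw [(hgd x hx').deriv]
        have hcx : c' 0 < c' x := hc'strictMono 0 h0i x hx' hx.1
        have hlx : lam' x ≤ lam' 0 := hlam'anti 0 h01 x ⟨hx'.1, hx'.2.le⟩ hx'.1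
        have hlxpos : 0 < lam' x := hlam'pos x ⟨hx'.1, hx'.2.le⟩
        have hlm := hlam_mem x ⟨hx'.1, hx'.2.le⟩
        nlinarith [mul_nonneg (mul_nonneg (sq_nonneg d) hlxpos.le) hlm.1,
          mul_le_mul_of_nonneg_left hlx (sq_nonneg d)]
    exact hmonoG ⟨le_refl 0, h.le⟩ ⟨h.le, le_refl α⟩ h.le

/-- NR equilibrium characterization. The profile `(0,0)` is a Nash
equilibrium iff `p ≥ d_A²` and `p ≥ d_B²`. -/
theorem NR_equilibrium_iff
    (lam lam' c c' : ℝ → ℝ)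
    (hlamDeriv : ∀ α ∈ Set.Icc (0:ℝ) 1, HasDerivAt lam (lam' α) α)
    (hlam'Cont : ContinuousOn lam' (Set.Icc (0:ℝ) 1))
    (hlam0 : lam 0 = 0) (hlam1 : lam 1 = 1)
    (hlam'pos : ∀ α ∈ Set.Icc (0:ℝ) 1, 0 < lam' α)
    (hlam'anti : ∀ x ∈ Set.Icc (0:ℝ) 1, ∀ y ∈ Set.Icc (0:ℝ) 1, x ≤ y → lam' y ≤ lam' x)
    (hcDeriv : ∀ α ∈ Set.Ico (0:ℝ) 1, HasDerivAt c (c' α) α)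
    (hc'Cont : ContinuousOn c' (Set.Ico (0:ℝ) 1))
    (hc0 : c 0 = 0)
    (hc'nonneg : ∀ α ∈ Set.Ico (0:ℝ) 1, 0 ≤ c' α)
    (hc'strictMono : ∀ x ∈ Set.Ico (0:ℝ) 1, ∀ y ∈ Set.Ico (0:ℝ) 1, x < y → c' x < c' y)
    (hc'top : Filter.Tendsto c' (nhdsWithin 1 (Set.Iio 1)) Filter.atTop)
    (thA thB muG dA dB : ℝ)
    (hdA : dA = thA - muG) (hdB : dB = thB - muG)
    (hdAne : dA ≠ 0) (hdBne : dB ≠ 0) :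
    IsNashEq lam c thA thB muG 0 0 ↔
      (c' 0 / lam' 0 ≥ dA ^ 2 ∧ c' 0 / lam' 0 ≥ dB ^ 2) := by
  have eqA : ∀ α, lossA lam c thA thB muG α 0 = dA^2*(1 - lam α/2)^2 + c α := by
    intro α
    simp only [lossA, teamDec, hlam0, hdA]
    ring
  have eqB : ∀ α, lossB lam c thA thB muG 0 α = dB^2*(1 - lam α/2)^2 + c α := by
    intro α
    simp only [lossB, teamDec, hlam0, hdB]
    ring
  have keyA := key_min_iff lam lam' c c' hlamDeriv hlam0 hlam1 hlam'pos hlam'anti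
    hcDeriv hc'strictMono dA hdAne
  have keyB := key_min_iff lam lam' c c' hlamDeriv hlam0 hlam1 hlam'pos hlam'anti
    hcDeriv hc'strictMono dB hdBne
  constructor
  · rintro ⟨-, -, hA, hB⟩
    refine ⟨keyA.mp ?_, keyB.mp ?_⟩
    · intro α hα
      rw [← eqA, ← eqA]
      exact hA α hα
    · intro α hα
      rw [← eqB, ← eqB]
      exact hB α hα
  · rintro ⟨h1, h2⟩
    refine ⟨⟨le_refl 0, zero_lt_one⟩, ⟨le_refl 0, zero_lt_one⟩, ?_, ?_⟩
    · intro α hα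
      rw [eqA, eqA]
      exact keyA.mpr h1 α hα
    · intro α hα
      rw [eqB, eqB]
      exact keyB.mpr h2 α hα
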